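/- For real numbers λ₁, λ₂, λ₃, λ₄ with |λᵢ| < 1 and λ₃ ≠ λ₄, and a nonnegative integer S, the sum ∑_{j₁≤0} ∑_{j₂≤0} ∑_{j₃≥0} λ₁^{-j₁} λ₂^{-j₂} λ₃^{j₃} λ₄^{|S-j₁-j₂-j₃|} equals λ₃^{S+1}(1-λ₄²)/((λ₃-λ₄)(1-λ₃λ₁)(1-λ₃λ₂)(1-λ₃λ₄)) + λ₄^{S+1}/((λ₄-λ₃)(1-λ₄λ₁)(1-λ₄λ₂)). -/

import Mathlib

private lemma abs_mul_lt_one' {a b : ℝ} (ha : |a| < 1) (hb : |b| < 1) : |a * b| < 1 := by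
  rw [abs_mul]
  nlinarith [abs_nonneg a, abs_nonneg b]

private lemma one_sub_ne' {a b : ℝ} (ha : |a| < 1) (hb : |b| < 1) : 1 - a * b ≠ 0 := by
  have h := abs_mul_lt_one' ha hb
  have : a * b < 1 := lt_of_le_of_lt (le_abs_self _) h
  linarith

private lemma two_geom' (c1 c2 r1 r2 : ℝ) (hr1 : |r1| < 1) (hr2 : |r2| < 1) :
    ∑' n : ℕ, (c1 * r1 ^ n + c2 * r2 ^ n) = c1 / (1 - r1) + c2 / (1 - r2) := by
  have s1 : Summable fun n : ℕ => r1 ^ n :=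
    summable_geometric_of_norm_lt_one (by simpa using hr1)
  have s2 : Summable fun n : ℕ => r2 ^ n :=
    summable_geometric_of_norm_lt_one (by simpa using hr2)
  rw [Summable.tsum_add (s1.mul_left c1) (s2.mul_left c2), tsum_mul_left, tsum_mul_left,
    tsum_geometric_of_norm_lt_one (by simpa using hr1),
    tsum_geometric_of_norm_lt_one (by simpa using hr2), div_eq_mul_inv, div_eq_mul_inv]

private lemma inner_summable' {l3 l4 : ℝ} (h3 : |l3| < 1) (h4 : |l4| < 1) (m : ℤ) :
    Summable fun n : ℕ => l3 ^ n * l4 ^ (m - n).natAbs := by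
  apply Summable.of_norm_bounded
    (summable_geometric_of_lt_one (abs_nonneg _) h3)
  intro n
  have h1 : |l4| ^ (m - n).natAbs ≤ 1 := pow_le_one₀ (abs_nonneg _) h4.le
  have h2 : (0:ℝ) ≤ |l3| ^ n := pow_nonneg (abs_nonneg _) _
  calc ‖l3 ^ n * l4 ^ (m - n).natAbs‖ = |l3| ^ n * |l4| ^ (m - n).natAbs := by
        rw [Real.norm_eq_abs, abs_mul, abs_pow, abs_pow]
    _ ≤ |l3| ^ n * 1 := by nlinarith
    _ = |l3| ^ n := mul_one _

private lemma inner_sum' {l3 l4 : ℝ} (h3 : |l3| < 1) (h4 : |l4| < 1) (h34 : l3 ≠ l4) (m : ℕ) :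
    ∑' n : ℕ, l3 ^ n * l4 ^ (((m : ℤ) - n).natAbs) =
      (l3 ^ (m + 1) - l4 ^ (m + 1)) / (l3 - l4) + l3 ^ (m + 1) * l4 / (1 - l3 * l4) := by
  have hs := inner_summable' h3 h4 (m : ℤ)
  rw [← Summable.sum_add_tsum_nat_add (m + 1) hs]
  have hfin : ∑ i ∈ Finset.range (m + 1), l3 ^ i * l4 ^ (((m : ℤ) - i).natAbs)
      = (l3 ^ (m + 1) - l4 ^ (m + 1)) / (l3 - l4) := by
    rw [eq_div_iff (sub_ne_zero.mpr h34), ← geom_sum₂_mul l3 l4 (m + 1)]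
    congr 1
    apply Finset.sum_congr rfl
    intro i hi
    rw [Finset.mem_range] at hi
    have : ((m : ℤ) - i).natAbs = m + 1 - 1 - i := by omega
    rw [this]
  have htail : ∑' k : ℕ, l3 ^ (k + (m + 1)) * l4 ^ (((m : ℤ) - ((k + (m + 1) : ℕ) : ℤ)).natAbs)
      = l3 ^ (m + 1) * l4 / (1 - l3 * l4) := by
    have key : ∀ k : ℕ, l3 ^ (k + (m + 1)) * l4 ^ (((m : ℤ) - ((k + (m + 1) : ℕ) : ℤ)).natAbs)
        = (l3 ^ (m + 1) * l4) * (l3 * l4) ^ k := by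
      intro k
      have : ((m : ℤ) - ((k + (m + 1) : ℕ) : ℤ)).natAbs = k + 1 := by omega
      rw [this]
      ring
    rw [tsum_congr key, tsum_mul_left,
      tsum_geometric_of_norm_lt_one
        (by rw [Real.norm_eq_abs]; exact abs_mul_lt_one' h3 h4),
      div_eq_mul_inv]
  rw [hfin, htail]

set_option maxHeartbeats 2000000 in
theorem stmt_13 (l1 l2 l3 l4 : ℝ) (h1 : |l1| < 1) (h2 : |l2| < 1) (h3 : |l3| < 1)
    (h4 : |l4| < 1) (h34 : l3 ≠ l4) (S : ℕ) :
    ∑' t : ℕ × ℕ × ℕ,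
        l1 ^ t.1 * l2 ^ t.2.1 * l3 ^ t.2.2 * l4 ^ ((S : ℤ) + t.1 + t.2.1 - t.2.2).natAbs =
      l3 ^ (S + 1) * (1 - l4 ^ 2) / ((l3 - l4) * (1 - l3 * l1) * (1 - l3 * l2) * (1 - l3 * l4)) +
      l4 ^ (S + 1) / ((l4 - l3) * (1 - l4 * l1) * (1 - l4 * l2)) := by
  set A : ℝ := l3 * (1 - l4 ^ 2) / ((l3 - l4) * (1 - l3 * l4)) with hA
  set B : ℝ := l4 / (l4 - l3) with hB
  have h34' : l3 - l4 ≠ 0 := sub_ne_zero.mpr h34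
  have h43' : l4 - l3 ≠ 0 := sub_ne_zero.mpr (Ne.symm h34)
  have e13 : (1:ℝ) - l1 * l3 ≠ 0 := one_sub_ne' h1 h3
  have e23 : (1:ℝ) - l2 * l3 ≠ 0 := one_sub_ne' h2 h3
  have e14 : (1:ℝ) - l1 * l4 ≠ 0 := one_sub_ne' h1 h4
  have e24 : (1:ℝ) - l2 * l4 ≠ 0 := one_sub_ne' h2 h4
  have e34 : (1:ℝ) - l3 * l4 ≠ 0 := one_sub_ne' h3 h4
  -- summability of the full function
  have s1 : Summable fun n : ℕ => |l1| ^ n := summable_geometric_of_lt_one (abs_nonneg _) h1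
  have s2 : Summable fun n : ℕ => |l2| ^ n := summable_geometric_of_lt_one (abs_nonneg _) h2
  have s3 : Summable fun n : ℕ => |l3| ^ n := summable_geometric_of_lt_one (abs_nonneg _) h3
  have s23 : Summable fun p : ℕ × ℕ => |l2| ^ p.1 * |l3| ^ p.2 :=
    s2.mul_of_nonneg s3 (fun n => by positivity) (fun n => by positivity)
  have sg : Summable fun t : ℕ × ℕ × ℕ => |l1| ^ t.1 * (|l2| ^ t.2.1 * |l3| ^ t.2.2) :=
    s1.mul_of_nonneg s23 (fun n => by positivity) (fun p => by positivity)
  have hf : Summable fun t : ℕ × ℕ × ℕ =>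
      l1 ^ t.1 * l2 ^ t.2.1 * l3 ^ t.2.2 * l4 ^ ((S : ℤ) + t.1 + t.2.1 - t.2.2).natAbs := by
    apply Summable.of_norm_bounded sg
    intro t
    have hb : |l4| ^ ((S : ℤ) + t.1 + t.2.1 - t.2.2).natAbs ≤ 1 := pow_le_one₀ (abs_nonneg _) h4.le
    have hnn : (0:ℝ) ≤ |l1| ^ t.1 * |l2| ^ t.2.1 * |l3| ^ t.2.2 := by positivity
    calc ‖l1 ^ t.1 * l2 ^ t.2.1 * l3 ^ t.2.2 * l4 ^ ((S : ℤ) + t.1 + t.2.1 - t.2.2).natAbs‖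
        = (|l1| ^ t.1 * |l2| ^ t.2.1 * |l3| ^ t.2.2) *
            |l4| ^ ((S : ℤ) + t.1 + t.2.1 - t.2.2).natAbs := by
          rw [Real.norm_eq_abs, abs_mul, abs_mul, abs_mul, abs_pow, abs_pow, abs_pow, abs_pow]
      _ ≤ (|l1| ^ t.1 * |l2| ^ t.2.1 * |l3| ^ t.2.2) * 1 := by nlinarith
      _ = |l1| ^ t.1 * (|l2| ^ t.2.1 * |l3| ^ t.2.2) := by ring
  -- inner sum value, with A, B
  have hinner : ∀ m : ℕ, ∑' n : ℕ, l3 ^ n * l4 ^ (((m : ℤ) - n).natAbs)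
      = A * l3 ^ m + B * l4 ^ m := by
    intro m
    rw [inner_sum' h3 h4 h34 m, hA, hB]
    field_simp
    ring
  rw [Summable.tsum_prod' hf hf.prod_factor]
  have step : ∀ t1 : ℕ, (∑' p : ℕ × ℕ,
      l1 ^ (t1, p).1 * l2 ^ (t1, p).2.1 * l3 ^ (t1, p).2.2 *
        l4 ^ ((S : ℤ) + (t1, p).1 + (t1, p).2.1 - (t1, p).2.2).natAbs)
      = A * l3 ^ S / (1 - l2 * l3) * (l1 * l3) ^ t1
        + B * l4 ^ S / (1 - l2 * l4) * (l1 * l4) ^ t1 := by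
    intro t1
    rw [Summable.tsum_prod' (hf.prod_factor t1) (hf.prod_factor t1).prod_factor]
    have inner3 : ∀ t2 : ℕ, (∑' t3 : ℕ,
        l1 ^ t1 * l2 ^ t2 * l3 ^ t3 * l4 ^ ((S : ℤ) + t1 + t2 - t3).natAbs)
        = (l1 ^ t1 * A * l3 ^ (S + t1)) * (l2 * l3) ^ t2
          + (l1 ^ t1 * B * l4 ^ (S + t1)) * (l2 * l4) ^ t2 := by
      intro t2
      have harg : ∀ t3 : ℕ, ((S : ℤ) + t1 + t2 - t3).natAbs
          = ((((S + t1 + t2 : ℕ) : ℤ)) - t3).natAbs := by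
        intro t3; omega
      calc (∑' t3 : ℕ, l1 ^ t1 * l2 ^ t2 * l3 ^ t3 * l4 ^ ((S : ℤ) + t1 + t2 - t3).natAbs)
          = ∑' t3 : ℕ, (l1 ^ t1 * l2 ^ t2) *
              (l3 ^ t3 * l4 ^ ((((S + t1 + t2 : ℕ) : ℤ)) - t3).natAbs) := by
            refine tsum_congr fun t3 => ?_
            rw [harg t3]; ring
        _ = (l1 ^ t1 * l2 ^ t2) *
              ∑' t3 : ℕ, l3 ^ t3 * l4 ^ ((((S + t1 + t2 : ℕ) : ℤ)) - t3).natAbs :=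
            tsum_mul_left
        _ = (l1 ^ t1 * l2 ^ t2) * (A * l3 ^ (S + t1 + t2) + B * l4 ^ (S + t1 + t2)) := by
            rw [hinner (S + t1 + t2)]
        _ = _ := by ring
    rw [tsum_congr inner3,
      two_geom' _ _ _ _ (abs_mul_lt_one' h2 h3) (abs_mul_lt_one' h2 h4)]
    ring
  rw [tsum_congr step,
    two_geom' _ _ _ _ (abs_mul_lt_one' h1 h3) (abs_mul_lt_one' h1 h4), hA, hB]
  have hD1' : (l3 - l4) * (1 - l3 * l1) * (1 - l3 * l2) * (1 - l3 * l4) ≠ 0 := by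
    rw [mul_comm l3 l1, mul_comm l3 l2]
    exact mul_ne_zero (mul_ne_zero (mul_ne_zero h34' e13) e23) e34
  have hD2' : (l4 - l3) * (1 - l4 * l1) * (1 - l4 * l2) ≠ 0 := by
    rw [mul_comm l4 l1, mul_comm l4 l2]
    exact mul_ne_zero (mul_ne_zero h43' e14) e24
  have T1 : l3 * (1 - l4 ^ 2) / ((l3 - l4) * (1 - l3 * l4)) * l3 ^ S / (1 - l2 * l3) /
        (1 - l1 * l3)
      = l3 ^ (S + 1) * (1 - l4 ^ 2) /
          ((l3 - l4) * (1 - l3 * l1) * (1 - l3 * l2) * (1 - l3 * l4)) := by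
    rw [div_mul_eq_mul_div, div_div, div_div, div_eq_div_iff (mul_ne_zero (mul_ne_zero h34' e34) (mul_ne_zero e23 e13)) hD1']
    ring
  have T2 : l4 / (l4 - l3) * l4 ^ S / (1 - l2 * l4) / (1 - l1 * l4)
      = l4 ^ (S + 1) / ((l4 - l3) * (1 - l4 * l1) * (1 - l4 * l2)) := by
    rw [div_mul_eq_mul_div, div_div, div_div, div_eq_div_iff (mul_ne_zero h43' (mul_ne_zero e24 e14)) hD2']
    ring
  rw [T1, T2]
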